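/- Let n, m, m̃, ñ be positive integers, Φ ∈ ℝ^{n×m}, S ∈ ℝ^{m×m}, y ∈ ℝ^n, σ² > 0, and define L_μ(μ) = (1/σ²)(−2 yᵀΦμ + ‖Φμ‖²) + μᵀSμ. Let ĩ, j̃ ∈ {1,…,m}^{m̃} and ℓ̃ ∈ {1,…,n}^{ñ} be mutually independent random index vectors with i.i.d. uniform entries, and let T(μ; ĩ, j̃, ℓ̃) = −(2nm/(σ²ñm̃)) y_{ℓ̃}ᵀ Φ_{ℓ̃,ĩ} μ_{ĩ} + (nm²/(σ²ñm̃²)) μ_{j̃}ᵀ Φ_{ℓ̃,j̃}ᵀ Φ_{ℓ̃,ĩ} μ_{ĩ} + (m²/m̃²) μ_{j̃}ᵀ S_{j̃,ĩ} μ_{ĩ} be the quadruply stochastic estimator. Then for every μ ∈ ℝ^m and every coordinate k ∈ {1,…,m}, E[ ∂T/∂μ_k (μ; ĩ, j̃, ℓ̃) ] = ∂L_μ/∂μ_k (μ); i.e., the gradient of the estimator with respect to μ is an unbiased estimator of the gradient of L_μ. -/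

import Mathlib

open Matrix BigOperators

lemma sum_eval {α β : Type*} [Fintype α] [Fintype β] [DecidableEq α]
    (f : β → ℝ) (a : α) :
    (Fintype.card β : ℝ) * ∑ g : α → β, f (g a)
      = (Fintype.card β : ℝ) ^ (Fintype.card α) * ∑ b, f b := by
  have h1 : ∑ g : α → β, f (g a)
      = ∑ p : β × ({ j // j ≠ a } → β), f p.1 :=
    Fintype.sum_equiv (Equiv.funSplitAt a β) _ _ (fun g => rfl)
  rw [h1, Fintype.sum_prod_type]
  simp only [Finset.sum_const, nsmul_eq_mul, Finset.card_univ, Fintype.card_fun,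
    Fintype.card_subtype_compl, Fintype.card_unique]
  have hpos : 1 ≤ Fintype.card α := Fintype.card_pos_iff.mpr ⟨a⟩
  rw [← Finset.mul_sum, ← mul_assoc, Nat.cast_pow, ← pow_succ',
    Nat.sub_add_cancel hpos]

lemma sum_eval2 {α β α' β' : Type*} [Fintype α] [Fintype β] [Fintype α'] [Fintype β']
    [DecidableEq α] [DecidableEq α'] (F : β → β' → ℝ) (a : α) (a' : α') :
    (Fintype.card β : ℝ) * (Fintype.card β') *
        ∑ g : α → β, ∑ h : α' → β', F (g a) (h a')
      = (Fintype.card β : ℝ) ^ (Fintype.card α) *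
          (Fintype.card β' : ℝ) ^ (Fintype.card α') * ∑ b, ∑ b', F b b' := by
  have h1 : ∀ x : β, (Fintype.card β' : ℝ) * ∑ h : α' → β', F x (h a')
      = (Fintype.card β' : ℝ) ^ (Fintype.card α') * ∑ b', F x b' :=
    fun x => sum_eval (F x) a'
  have step : (Fintype.card β' : ℝ) * ∑ g : α → β, ∑ h : α' → β', F (g a) (h a')
      = (Fintype.card β' : ℝ) ^ (Fintype.card α') * ∑ g : α → β, ∑ b', F (g a) b' := by
    rw [Finset.mul_sum, Finset.mul_sum]
    exact Finset.sum_congr rfl fun g _ => h1 (g a)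
  have h2 := sum_eval (fun b => ∑ b', F b b') a
  calc (Fintype.card β : ℝ) * (Fintype.card β') *
        ∑ g : α → β, ∑ h : α' → β', F (g a) (h a')
      = (Fintype.card β : ℝ) * ((Fintype.card β' : ℝ) *
          ∑ g : α → β, ∑ h : α' → β', F (g a) (h a')) := by ring
    _ = (Fintype.card β' : ℝ) ^ (Fintype.card α') *
          ((Fintype.card β : ℝ) * ∑ g : α → β, ∑ b', F (g a) b') := by rw [step]; ring
    _ = _ := by rw [h2]; ring

lemma sum_eval3 {α1 β1 α2 β2 α3 β3 : Type*}
    [Fintype α1] [Fintype β1] [Fintype α2] [Fintype β2] [Fintype α3] [Fintype β3]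
    [DecidableEq α1] [DecidableEq α2] [DecidableEq α3]
    (F : β1 → β2 → β3 → ℝ) (a1 : α1) (a2 : α2) (a3 : α3) :
    (Fintype.card β1 : ℝ) * (Fintype.card β2) * (Fintype.card β3) *
        ∑ g1 : α1 → β1, ∑ g2 : α2 → β2, ∑ g3 : α3 → β3, F (g1 a1) (g2 a2) (g3 a3)
      = (Fintype.card β1 : ℝ) ^ (Fintype.card α1) *
          (Fintype.card β2 : ℝ) ^ (Fintype.card α2) *
          (Fintype.card β3 : ℝ) ^ (Fintype.card α3) * ∑ b1, ∑ b2, ∑ b3, F b1 b2 b3 := by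
  have h1 : ∀ x : β1,
      (Fintype.card β2 : ℝ) * (Fintype.card β3) *
          ∑ g2 : α2 → β2, ∑ g3 : α3 → β3, F x (g2 a2) (g3 a3)
        = (Fintype.card β2 : ℝ) ^ (Fintype.card α2) *
            (Fintype.card β3 : ℝ) ^ (Fintype.card α3) * ∑ b2, ∑ b3, F x b2 b3 :=
    fun x => sum_eval2 (F x) a2 a3
  have step : (Fintype.card β2 : ℝ) * (Fintype.card β3) *
      ∑ g1 : α1 → β1, ∑ g2 : α2 → β2, ∑ g3 : α3 → β3, F (g1 a1) (g2 a2) (g3 a3)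
      = (Fintype.card β2 : ℝ) ^ (Fintype.card α2) * (Fintype.card β3 : ℝ) ^ (Fintype.card α3) *
        ∑ g1 : α1 → β1, ∑ b2, ∑ b3, F (g1 a1) b2 b3 := by
    rw [Finset.mul_sum, Finset.mul_sum]
    exact Finset.sum_congr rfl fun g _ => h1 (g a1)
  have h2 := sum_eval (fun b1 => ∑ b2, ∑ b3, F b1 b2 b3) a1
  calc (Fintype.card β1 : ℝ) * (Fintype.card β2) * (Fintype.card β3) *
        ∑ g1 : α1 → β1, ∑ g2 : α2 → β2, ∑ g3 : α3 → β3, F (g1 a1) (g2 a2) (g3 a3)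
      = (Fintype.card β1 : ℝ) * ((Fintype.card β2 : ℝ) * (Fintype.card β3) *
          ∑ g1 : α1 → β1, ∑ g2 : α2 → β2, ∑ g3 : α3 → β3, F (g1 a1) (g2 a2) (g3 a3)) := by ring
    _ = (Fintype.card β2 : ℝ) ^ (Fintype.card α2) * (Fintype.card β3 : ℝ) ^ (Fintype.card α3) *
          ((Fintype.card β1 : ℝ) * ∑ g1 : α1 → β1, ∑ b2, ∑ b3, F (g1 a1) b2 b3) := by
        rw [step]; ring
    _ = _ := by rw [h2]; ring

lemma sum_swap22 {ι1 ι2 κ1 κ2 : Type*} [Fintype ι1] [Fintype ι2] [Fintype κ1] [Fintype κ2]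
    (f : ι1 → ι2 → κ1 → κ2 → ℝ) :
    ∑ x1 : ι1, ∑ x2 : ι2, ∑ y1 : κ1, ∑ y2 : κ2, f x1 x2 y1 y2
      = ∑ y1 : κ1, ∑ y2 : κ2, ∑ x1 : ι1, ∑ x2 : ι2, f x1 x2 y1 y2 := by
  calc ∑ x1 : ι1, ∑ x2 : ι2, ∑ y1 : κ1, ∑ y2 : κ2, f x1 x2 y1 y2
      = ∑ p : ι1 × ι2, ∑ q : κ1 × κ2, f p.1 p.2 q.1 q.2 := by
        simp only [Fintype.sum_prod_type]
    _ = ∑ q : κ1 × κ2, ∑ p : ι1 × ι2, f p.1 p.2 q.1 q.2 := Finset.sum_comm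
    _ = _ := by simp only [Fintype.sum_prod_type]

lemma sum_swap33 {ι1 ι2 ι3 κ1 κ2 κ3 : Type*}
    [Fintype ι1] [Fintype ι2] [Fintype ι3] [Fintype κ1] [Fintype κ2] [Fintype κ3]
    (f : ι1 → ι2 → ι3 → κ1 → κ2 → κ3 → ℝ) :
    ∑ x1 : ι1, ∑ x2 : ι2, ∑ x3 : ι3, ∑ y1 : κ1, ∑ y2 : κ2, ∑ y3 : κ3, f x1 x2 x3 y1 y2 y3
      = ∑ y1 : κ1, ∑ y2 : κ2, ∑ y3 : κ3, ∑ x1 : ι1, ∑ x2 : ι2, ∑ x3 : ι3,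
          f x1 x2 x3 y1 y2 y3 := by
  calc ∑ x1 : ι1, ∑ x2 : ι2, ∑ x3 : ι3, ∑ y1 : κ1, ∑ y2 : κ2, ∑ y3 : κ3, f x1 x2 x3 y1 y2 y3
      = ∑ p : ι1 × ι2 × ι3, ∑ q : κ1 × κ2 × κ3, f p.1 p.2.1 p.2.2 q.1 q.2.1 q.2.2 := by
        simp only [Fintype.sum_prod_type]
    _ = ∑ q : κ1 × κ2 × κ3, ∑ p : ι1 × ι2 × ι3, f p.1 p.2.1 p.2.2 q.1 q.2.1 q.2.2 :=
        Finset.sum_comm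
    _ = _ := by simp only [Fintype.sum_prod_type]

lemma claim1 (n m m' n' : ℕ)
    (Φ : Matrix (Fin n) (Fin m) ℝ) (y : Fin n → ℝ) (ν : Fin m → ℝ) :
    (n : ℝ) * m * ∑ ii : Fin m' → Fin m, ∑ jj : Fin m' → Fin m, ∑ ll : Fin n' → Fin n,
        (y ∘ ll) ⬝ᵥ (Φ.submatrix ll ii) *ᵥ (ν ∘ ii)
      = (m : ℝ) ^ m' * (m : ℝ) ^ m' * (n : ℝ) ^ n' * n' * m' * (y ⬝ᵥ Φ *ᵥ ν) := by
  have e1 : ∀ (ii : Fin m' → Fin m) (ll : Fin n' → Fin n),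
      (y ∘ ll) ⬝ᵥ (Φ.submatrix ll ii) *ᵥ (ν ∘ ii)
        = ∑ a : Fin n', ∑ b : Fin m', y (ll a) * (Φ (ll a) (ii b) * ν (ii b)) := by
    intro ii ll; simp [dotProduct, mulVec, Finset.mul_sum, Function.comp]
  have eA : y ⬝ᵥ Φ *ᵥ ν = ∑ j : Fin m, ∑ i : Fin n, y i * (Φ i j * ν j) := by
    simp [dotProduct, mulVec, Finset.mul_sum]; exact Finset.sum_comm
  have key : ∀ (a : Fin n') (b : Fin m'),
      (m : ℝ) * n * ∑ ii : Fin m' → Fin m, ∑ ll : Fin n' → Fin n,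
          y (ll a) * (Φ (ll a) (ii b) * ν (ii b))
        = (m : ℝ) ^ m' * (n : ℝ) ^ n' * ∑ j, ∑ i, y i * (Φ i j * ν j) := by
    intro a b
    have := sum_eval2 (fun j i => y i * (Φ i j * ν j)) b a
    simpa using this
  simp only [e1]
  -- kill jj sum (constant)
  rw [show (∑ ii : Fin m' → Fin m, ∑ jj : Fin m' → Fin m, ∑ ll : Fin n' → Fin n,
      ∑ a : Fin n', ∑ b : Fin m', y (ll a) * (Φ (ll a) (ii b) * ν (ii b)))
    = (m : ℝ) ^ m' * ∑ ii : Fin m' → Fin m, ∑ ll : Fin n' → Fin n,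
      ∑ a : Fin n', ∑ b : Fin m', y (ll a) * (Φ (ll a) (ii b) * ν (ii b)) from by
    rw [Finset.mul_sum]
    refine Finset.sum_congr rfl fun ii _ => ?_
    rw [Finset.sum_const]
    simp [Finset.card_univ, mul_comm]]
  rw [sum_swap22]
  calc (n:ℝ) * m * ((m:ℝ)^m' * ∑ a : Fin n', ∑ b : Fin m', ∑ ii : Fin m' → Fin m,
        ∑ ll : Fin n' → Fin n, y (ll a) * (Φ (ll a) (ii b) * ν (ii b)))
      = (m:ℝ)^m' * ∑ a : Fin n', ∑ b : Fin m', ((m:ℝ) * n * ∑ ii : Fin m' → Fin m,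
        ∑ ll : Fin n' → Fin n, y (ll a) * (Φ (ll a) (ii b) * ν (ii b))) := by
        simp only [Finset.mul_sum]
        refine Finset.sum_congr rfl fun a _ => Finset.sum_congr rfl fun b _ =>
          Finset.sum_congr rfl fun ii _ => Finset.sum_congr rfl fun ll _ => by ring
    _ = (m:ℝ)^m' * ∑ a : Fin n', ∑ b : Fin m',
        ((m : ℝ) ^ m' * (n : ℝ) ^ n' * ∑ j, ∑ i, y i * (Φ i j * ν j)) := by
        congr 1; exact Finset.sum_congr rfl fun a _ => Finset.sum_congr rfl fun b _ => key a b
    _ = _ := by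
        simp only [Finset.sum_const, Finset.card_univ, Fintype.card_fin, nsmul_eq_mul, eA]
        ring

lemma claim2 (n m m' n' : ℕ)
    (Φ : Matrix (Fin n) (Fin m) ℝ) (ν : Fin m → ℝ) :
    (m : ℝ) * m * n * ∑ ii : Fin m' → Fin m, ∑ jj : Fin m' → Fin m, ∑ ll : Fin n' → Fin n,
        (ν ∘ jj) ⬝ᵥ ((Φ.submatrix ll jj)ᵀ * Φ.submatrix ll ii) *ᵥ (ν ∘ ii)
      = (m : ℝ) ^ m' * (m : ℝ) ^ m' * (n : ℝ) ^ n' * n' * ((m' : ℝ) * m') *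
          ((Φ *ᵥ ν) ⬝ᵥ (Φ *ᵥ ν)) := by
  have e2 : ∀ (ii jj : Fin m' → Fin m) (ll : Fin n' → Fin n),
      (ν ∘ jj) ⬝ᵥ ((Φ.submatrix ll jj)ᵀ * Φ.submatrix ll ii) *ᵥ (ν ∘ ii)
        = ∑ b : Fin m', ∑ c : Fin m', ∑ a : Fin n',
            ν (jj b) * (Φ (ll a) (jj b) * (Φ (ll a) (ii c) * ν (ii c))) := by
    intro ii jj ll
    simp [dotProduct, mulVec, Matrix.mul_apply, Finset.mul_sum, Finset.sum_mul, mul_assoc,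
      Function.comp]
  have eB : (Φ *ᵥ ν) ⬝ᵥ (Φ *ᵥ ν) = ∑ q : Fin m, ∑ p : Fin m, ∑ i : Fin n,
      ν p * (Φ i p * (Φ i q * ν q)) := by
    simp only [dotProduct, mulVec, Finset.sum_mul, Finset.mul_sum]
    rw [Finset.sum_comm]
    refine Finset.sum_congr rfl fun q _ => ?_
    rw [Finset.sum_comm]
    exact Finset.sum_congr rfl fun i _ => Finset.sum_congr rfl fun p _ => by ring
  have key : ∀ (b c : Fin m') (a : Fin n'),
      (m : ℝ) * m * n * ∑ ii : Fin m' → Fin m, ∑ jj : Fin m' → Fin m, ∑ ll : Fin n' → Fin n,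
          ν (jj b) * (Φ (ll a) (jj b) * (Φ (ll a) (ii c) * ν (ii c)))
        = (m : ℝ) ^ m' * (m : ℝ) ^ m' * (n : ℝ) ^ n' *
            ∑ q, ∑ p, ∑ i, ν p * (Φ i p * (Φ i q * ν q)) := by
    intro b c a
    have := sum_eval3 (fun q p i => ν p * (Φ i p * (Φ i q * ν q))) c b a
    simpa using this
  simp only [e2]
  rw [sum_swap33]
  calc (m:ℝ) * m * n * ∑ b : Fin m', ∑ c : Fin m', ∑ a : Fin n', ∑ ii : Fin m' → Fin m,
        ∑ jj : Fin m' → Fin m, ∑ ll : Fin n' → Fin n,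
          ν (jj b) * (Φ (ll a) (jj b) * (Φ (ll a) (ii c) * ν (ii c)))
      = ∑ b : Fin m', ∑ c : Fin m', ∑ a : Fin n', ((m:ℝ) * m * n * ∑ ii : Fin m' → Fin m,
        ∑ jj : Fin m' → Fin m, ∑ ll : Fin n' → Fin n,
          ν (jj b) * (Φ (ll a) (jj b) * (Φ (ll a) (ii c) * ν (ii c)))) := by
        simp only [Finset.mul_sum]
    _ = ∑ b : Fin m', ∑ c : Fin m', ∑ a : Fin n', ((m : ℝ) ^ m' * (m : ℝ) ^ m' * (n : ℝ) ^ n' *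
          ∑ q, ∑ p, ∑ i, ν p * (Φ i p * (Φ i q * ν q))) := by
        exact Finset.sum_congr rfl fun b _ => Finset.sum_congr rfl fun c _ =>
          Finset.sum_congr rfl fun a _ => key b c a
    _ = _ := by
        simp only [Finset.sum_const, Finset.card_univ, Fintype.card_fin, nsmul_eq_mul, eB]
        ring

lemma claim3 (n m m' n' : ℕ)
    (S : Matrix (Fin m) (Fin m) ℝ) (ν : Fin m → ℝ) :
    (m : ℝ) * m * ∑ ii : Fin m' → Fin m, ∑ jj : Fin m' → Fin m, ∑ ll : Fin n' → Fin n,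
        (ν ∘ jj) ⬝ᵥ (S.submatrix jj ii) *ᵥ (ν ∘ ii)
      = (m : ℝ) ^ m' * (m : ℝ) ^ m' * (n : ℝ) ^ n' * ((m' : ℝ) * m') * (ν ⬝ᵥ S *ᵥ ν) := by
  have e3 : ∀ (ii jj : Fin m' → Fin m),
      (ν ∘ jj) ⬝ᵥ (S.submatrix jj ii) *ᵥ (ν ∘ ii)
        = ∑ b : Fin m', ∑ c : Fin m', ν (jj b) * (S (jj b) (ii c) * ν (ii c)) := by
    intro ii jj; simp [dotProduct, mulVec, Finset.mul_sum, Function.comp]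
  have eC : ν ⬝ᵥ S *ᵥ ν = ∑ q : Fin m, ∑ p : Fin m, ν p * (S p q * ν q) := by
    simp [dotProduct, mulVec, Finset.mul_sum]; exact Finset.sum_comm
  have key : ∀ (b c : Fin m'),
      (m : ℝ) * m * ∑ ii : Fin m' → Fin m, ∑ jj : Fin m' → Fin m,
          ν (jj b) * (S (jj b) (ii c) * ν (ii c))
        = (m : ℝ) ^ m' * (m : ℝ) ^ m' * ∑ q, ∑ p, ν p * (S p q * ν q) := by
    intro b c
    have := sum_eval2 (fun q p => ν p * (S p q * ν q)) c b
    simpa using this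
  simp only [e3]
  -- ll sum is constant
  rw [show (∑ ii : Fin m' → Fin m, ∑ jj : Fin m' → Fin m, ∑ _ll : Fin n' → Fin n,
      ∑ b : Fin m', ∑ c : Fin m', ν (jj b) * (S (jj b) (ii c) * ν (ii c)))
    = (n : ℝ) ^ n' * ∑ ii : Fin m' → Fin m, ∑ jj : Fin m' → Fin m,
      ∑ b : Fin m', ∑ c : Fin m', ν (jj b) * (S (jj b) (ii c) * ν (ii c)) from by
    rw [Finset.mul_sum]
    refine Finset.sum_congr rfl fun ii _ => ?_
    rw [Finset.mul_sum]
    refine Finset.sum_congr rfl fun jj _ => ?_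
    rw [Finset.sum_const]
    simp [Finset.card_univ, mul_comm]]
  rw [sum_swap22]
  calc (m:ℝ) * m * ((n:ℝ)^n' * ∑ b : Fin m', ∑ c : Fin m', ∑ ii : Fin m' → Fin m,
        ∑ jj : Fin m' → Fin m, ν (jj b) * (S (jj b) (ii c) * ν (ii c)))
      = (n:ℝ)^n' * ∑ b : Fin m', ∑ c : Fin m', ((m:ℝ) * m * ∑ ii : Fin m' → Fin m,
        ∑ jj : Fin m' → Fin m, ν (jj b) * (S (jj b) (ii c) * ν (ii c))) := by
        simp only [Finset.mul_sum]
        refine Finset.sum_congr rfl fun b _ => Finset.sum_congr rfl fun c _ =>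
          Finset.sum_congr rfl fun ii _ => Finset.sum_congr rfl fun jj _ => by ring
    _ = (n:ℝ)^n' * ∑ b : Fin m', ∑ c : Fin m',
          ((m : ℝ) ^ m' * (m : ℝ) ^ m' * ∑ q, ∑ p, ν p * (S p q * ν q)) := by
        congr 1
        exact Finset.sum_congr rfl fun b _ => Finset.sum_congr rfl fun c _ => key b c
    _ = _ := by
        simp only [Finset.sum_const, Finset.card_univ, Fintype.card_fin, nsmul_eq_mul, eC]
        ring

lemma Texp (n m m' n' : ℕ) (hn : 0 < n) (hm : 0 < m) (hm' : 0 < m') (hn' : 0 < n')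
    (Φ : Matrix (Fin n) (Fin m) ℝ) (S : Matrix (Fin m) (Fin m) ℝ)
    (y : Fin n → ℝ) (σ2 : ℝ) (hσ : 0 < σ2) (ν : Fin m → ℝ) :
    (∑ ii : Fin m' → Fin m, ∑ jj : Fin m' → Fin m, ∑ ll : Fin n' → Fin n,
        (-(2 * (n : ℝ) * m / (σ2 * n' * m')) *
            ((y ∘ ll) ⬝ᵥ (Φ.submatrix ll ii) *ᵥ (ν ∘ ii))
          + ((n : ℝ) * m ^ 2 / (σ2 * n' * (m' : ℝ) ^ 2)) *
            ((ν ∘ jj) ⬝ᵥ ((Φ.submatrix ll jj)ᵀ * Φ.submatrix ll ii) *ᵥ (ν ∘ ii))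
          + ((m : ℝ) ^ 2 / (m' : ℝ) ^ 2) *
            ((ν ∘ jj) ⬝ᵥ (S.submatrix jj ii) *ᵥ (ν ∘ ii))))
      = ((m : ℝ) ^ m' * (m : ℝ) ^ m' * (n : ℝ) ^ n') *
          ((1 / σ2) * (-2 * (y ⬝ᵥ Φ *ᵥ ν) + ((Φ *ᵥ ν) ⬝ᵥ (Φ *ᵥ ν))) + ν ⬝ᵥ S *ᵥ ν) := by
  have hN : (n : ℝ) ≠ 0 := Nat.cast_ne_zero.mpr hn.ne'
  have hM : (m : ℝ) ≠ 0 := Nat.cast_ne_zero.mpr hm.ne'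
  have hM' : (m' : ℝ) ≠ 0 := Nat.cast_ne_zero.mpr hm'.ne'
  have hN' : (n' : ℝ) ≠ 0 := Nat.cast_ne_zero.mpr hn'.ne'
  have hS : σ2 ≠ 0 := hσ.ne'
  have split : (∑ ii : Fin m' → Fin m, ∑ jj : Fin m' → Fin m, ∑ ll : Fin n' → Fin n,
      (-(2 * (n : ℝ) * m / (σ2 * n' * m')) *
          ((y ∘ ll) ⬝ᵥ (Φ.submatrix ll ii) *ᵥ (ν ∘ ii))
        + ((n : ℝ) * m ^ 2 / (σ2 * n' * (m' : ℝ) ^ 2)) *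
          ((ν ∘ jj) ⬝ᵥ ((Φ.submatrix ll jj)ᵀ * Φ.submatrix ll ii) *ᵥ (ν ∘ ii))
        + ((m : ℝ) ^ 2 / (m' : ℝ) ^ 2) *
          ((ν ∘ jj) ⬝ᵥ (S.submatrix jj ii) *ᵥ (ν ∘ ii))))
    = -(2 * (n : ℝ) * m / (σ2 * n' * m')) *
        (∑ ii : Fin m' → Fin m, ∑ jj : Fin m' → Fin m, ∑ ll : Fin n' → Fin n,
          (y ∘ ll) ⬝ᵥ (Φ.submatrix ll ii) *ᵥ (ν ∘ ii))
      + ((n : ℝ) * m ^ 2 / (σ2 * n' * (m' : ℝ) ^ 2)) *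
        (∑ ii : Fin m' → Fin m, ∑ jj : Fin m' → Fin m, ∑ ll : Fin n' → Fin n,
          (ν ∘ jj) ⬝ᵥ ((Φ.submatrix ll jj)ᵀ * Φ.submatrix ll ii) *ᵥ (ν ∘ ii))
      + ((m : ℝ) ^ 2 / (m' : ℝ) ^ 2) *
        (∑ ii : Fin m' → Fin m, ∑ jj : Fin m' → Fin m, ∑ ll : Fin n' → Fin n,
          (ν ∘ jj) ⬝ᵥ (S.submatrix jj ii) *ᵥ (ν ∘ ii)) := by
    simp only [Finset.sum_add_distrib, Finset.mul_sum]
  rw [split]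
  have h1 := claim1 n m m' n' Φ y ν
  have h2 := claim2 n m m' n' Φ ν
  have h3 := claim3 n m m' n' S ν
  set Sig1 := ∑ ii : Fin m' → Fin m, ∑ jj : Fin m' → Fin m, ∑ ll : Fin n' → Fin n,
    (y ∘ ll) ⬝ᵥ (Φ.submatrix ll ii) *ᵥ (ν ∘ ii) with hSig1
  set Sig2 := ∑ ii : Fin m' → Fin m, ∑ jj : Fin m' → Fin m, ∑ ll : Fin n' → Fin n,
    (ν ∘ jj) ⬝ᵥ ((Φ.submatrix ll jj)ᵀ * Φ.submatrix ll ii) *ᵥ (ν ∘ ii) with hSig2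
  set Sig3 := ∑ ii : Fin m' → Fin m, ∑ jj : Fin m' → Fin m, ∑ ll : Fin n' → Fin n,
    (ν ∘ jj) ⬝ᵥ (S.submatrix jj ii) *ᵥ (ν ∘ ii) with hSig3
  have e1 : Sig1 = (m : ℝ) ^ m' * (m : ℝ) ^ m' * (n : ℝ) ^ n' * n' * m' * (y ⬝ᵥ Φ *ᵥ ν)
      / ((n : ℝ) * m) := by
    rw [eq_div_iff (by positivity)]; linear_combination h1
  have e2 : Sig2 = (m : ℝ) ^ m' * (m : ℝ) ^ m' * (n : ℝ) ^ n' * n' * ((m' : ℝ) * m') *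
      ((Φ *ᵥ ν) ⬝ᵥ (Φ *ᵥ ν)) / ((m : ℝ) * m * n) := by
    rw [eq_div_iff (by positivity)]; linear_combination h2
  have e3 : Sig3 = (m : ℝ) ^ m' * (m : ℝ) ^ m' * (n : ℝ) ^ n' * ((m' : ℝ) * m') *
      (ν ⬝ᵥ S *ᵥ ν) / ((m : ℝ) * m) := by
    rw [eq_div_iff (by positivity)]; linear_combination h3
  rw [e1, e2, e3]
  field_simp

/-- the gradient of the quadruply stochastic estimator with respect to
`μ` is an unbiased estimator of the gradient of `L_μ`: for every `μ` and every coordinate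
`k`, the expectation over the index vectors `ii, jj : Fin m' → Fin m`,
`ll : Fin n' → Fin n` (i.i.d. uniform entries, mutually independent; expectation formalized
as the uniform average over all index functions) of the partial derivative `∂T/∂μ_k`
(formalized as the Fréchet derivative at `μ` in the direction `Pi.single k 1`) equals
`∂L_μ/∂μ_k (μ)`.  Here `m'` plays the role of `m̃` and `n'` of `ñ`. -/
theorem quadruply_stochastic_gradient_unbiased
    (n m m' n' : ℕ) (hn : 0 < n) (hm : 0 < m) (hm' : 0 < m') (hn' : 0 < n')
    (Φ : Matrix (Fin n) (Fin m) ℝ) (S : Matrix (Fin m) (Fin m) ℝ)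
    (y : Fin n → ℝ) (σ2 : ℝ) (hσ : 0 < σ2)
    (μ : Fin m → ℝ) (k : Fin m) :
    (∑ ii : Fin m' → Fin m, ∑ jj : Fin m' → Fin m, ∑ ll : Fin n' → Fin n,
        fderiv ℝ
          (fun ν : Fin m → ℝ =>
            -(2 * (n : ℝ) * m / (σ2 * n' * m')) *
                ((y ∘ ll) ⬝ᵥ (Φ.submatrix ll ii) *ᵥ (ν ∘ ii))
              + ((n : ℝ) * m ^ 2 / (σ2 * n' * (m' : ℝ) ^ 2)) *
                ((ν ∘ jj) ⬝ᵥ ((Φ.submatrix ll jj)ᵀ * Φ.submatrix ll ii) *ᵥ (ν ∘ ii))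
              + ((m : ℝ) ^ 2 / (m' : ℝ) ^ 2) *
                ((ν ∘ jj) ⬝ᵥ (S.submatrix jj ii) *ᵥ (ν ∘ ii)))
          μ (Pi.single k 1))
      / ((Fintype.card (Fin m' → Fin m) : ℝ) * (Fintype.card (Fin m' → Fin m)) *
          (Fintype.card (Fin n' → Fin n)))
    = fderiv ℝ
        (fun ν : Fin m → ℝ =>
          (1 / σ2) * (-2 * (y ⬝ᵥ Φ *ᵥ ν) + ((Φ *ᵥ ν) ⬝ᵥ (Φ *ᵥ ν))) + ν ⬝ᵥ S *ᵥ ν)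
        μ (Pi.single k 1) := by
  have hM : (m : ℝ) ≠ 0 := Nat.cast_ne_zero.mpr hm.ne'
  have hN : (n : ℝ) ≠ 0 := Nat.cast_ne_zero.mpr hn.ne'
  set v := (Pi.single k 1 : Fin m → ℝ) with hv
  set C : ℝ := (m : ℝ) ^ m' * (m : ℝ) ^ m' * (n : ℝ) ^ n' with hC
  have hCne : C ≠ 0 := by positivity
  set L : (Fin m → ℝ) → ℝ := fun ν =>
    (1 / σ2) * (-2 * (y ⬝ᵥ Φ *ᵥ ν) + ((Φ *ᵥ ν) ⬝ᵥ (Φ *ᵥ ν))) + ν ⬝ᵥ S *ᵥ ν with hL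
  set T : (Fin m' → Fin m) → (Fin m' → Fin m) → (Fin n' → Fin n) → (Fin m → ℝ) → ℝ :=
    fun ii jj ll ν =>
      -(2 * (n : ℝ) * m / (σ2 * n' * m')) *
          ((y ∘ ll) ⬝ᵥ (Φ.submatrix ll ii) *ᵥ (ν ∘ ii))
        + ((n : ℝ) * m ^ 2 / (σ2 * n' * (m' : ℝ) ^ 2)) *
          ((ν ∘ jj) ⬝ᵥ ((Φ.submatrix ll jj)ᵀ * Φ.submatrix ll ii) *ᵥ (ν ∘ ii))
        + ((m : ℝ) ^ 2 / (m' : ℝ) ^ 2) *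
          ((ν ∘ jj) ⬝ᵥ (S.submatrix jj ii) *ᵥ (ν ∘ ii)) with hT
  have hTdiff : ∀ ii jj ll, Differentiable ℝ (T ii jj ll) := by
    intro ii jj ll
    simp only [hT, dotProduct, mulVec, Function.comp, Matrix.submatrix_apply]
    fun_prop
  have hLdiff : Differentiable ℝ L := by
    simp only [hL, dotProduct, mulVec]
    fun_prop
  -- sum of derivatives = derivative of sum
  have hsum : HasFDerivAt (fun ν => ∑ ii : Fin m' → Fin m, ∑ jj : Fin m' → Fin m,
      ∑ ll : Fin n' → Fin n, T ii jj ll ν)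
      (∑ ii : Fin m' → Fin m, ∑ jj : Fin m' → Fin m, ∑ ll : Fin n' → Fin n,
        fderiv ℝ (T ii jj ll) μ) μ := by
    apply HasFDerivAt.fun_sum; intro ii _
    apply HasFDerivAt.fun_sum; intro jj _
    apply HasFDerivAt.fun_sum; intro ll _
    exact (hTdiff ii jj ll μ).hasFDerivAt
  -- the averaged function equals C * L
  have hfun : (fun ν => ∑ ii : Fin m' → Fin m, ∑ jj : Fin m' → Fin m,
      ∑ ll : Fin n' → Fin n, T ii jj ll ν) = fun ν => C * L ν := by
    funext ν
    exact Texp n m m' n' hn hm hm' hn' Φ S y σ2 hσ ν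
  have hder : (∑ ii : Fin m' → Fin m, ∑ jj : Fin m' → Fin m, ∑ ll : Fin n' → Fin n,
      fderiv ℝ (T ii jj ll) μ) = C • fderiv ℝ L μ := by
    rw [← hsum.fderiv, hfun, fderiv_const_mul (hLdiff μ)]
  have happ : (∑ ii : Fin m' → Fin m, ∑ jj : Fin m' → Fin m, ∑ ll : Fin n' → Fin n,
      fderiv ℝ (T ii jj ll) μ v) = C * fderiv ℝ L μ v := by
    have := congrArg (fun (f : (Fin m → ℝ) →L[ℝ] ℝ) => f v) hder
    simpa [ContinuousLinearMap.sum_apply] using this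
  have hcard : ((Fintype.card (Fin m' → Fin m) : ℝ) * (Fintype.card (Fin m' → Fin m)) *
      (Fintype.card (Fin n' → Fin n))) = C := by
    simp [hC, Fintype.card_fun]
  rw [hcard]
  calc (∑ ii : Fin m' → Fin m, ∑ jj : Fin m' → Fin m, ∑ ll : Fin n' → Fin n,
        fderiv ℝ (T ii jj ll) μ v) / C
      = (C * fderiv ℝ L μ v) / C := by rw [happ]
    _ = fderiv ℝ L μ v := by field_simp
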